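/- Let α ∈ PSL(2,ℂ) be parabolic with fixed point p ∈ ℙ¹(ℂ), and let β ∈ PSL(2,ℂ) with β(p) ≠ p. Then there exists K > 0 such that αᵏβ is loxodromic for all integers k with |k| ≥ K. -/

import Mathlib

/- Common setup: PSL(2,ℂ), its action on ℙ¹(ℂ), loxodromic/parabolic/elliptic elements,
elementary subgroups, surface groups, the pentagon group Γ and the embedding ι. -/

noncomputable section

open Matrix

/-- `SL(2,ℂ)`. -/
abbrev SL2C : Type := Matrix.SpecialLinearGroup (Fin 2) ℂ

instance : TopologicalSpace SL2C := instTopologicalSpaceSubtype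

/-- `PSL(2,ℂ)`, the quotient of `SL(2,ℂ)` by its center `{±I}`. -/
abbrev PSL2C : Type := SL2C ⧸ Subgroup.center SL2C

/-- The quotient map `SL(2,ℂ) → PSL(2,ℂ)`. -/
def projPSL : SL2C →* PSL2C := QuotientGroup.mk' (Subgroup.center SL2C)

/-- The complex projective line `ℙ¹(ℂ)`. -/
abbrev P1 : Type := Projectivization ℂ (Fin 2 → ℂ)

/-- The square of the trace, well defined on `PSL(2,ℂ)`. -/
def trSq (g : PSL2C) : ℂ :=
  (Matrix.trace ((Quotient.out g : SL2C) : Matrix (Fin 2) (Fin 2) ℂ)) ^ 2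

/-- `g` is loxodromic iff `tr² g` is not a real number in `[0,4]`. -/
def IsLoxodromic (g : PSL2C) : Prop := ¬ ∃ r : ℝ, 0 ≤ r ∧ r ≤ 4 ∧ trSq g = (r : ℂ)

/-- `g` is parabolic iff `g ≠ 1` and `tr² g = 4`. -/
def IsParabolic (g : PSL2C) : Prop := g ≠ 1 ∧ trSq g = 4

/-- `g` is elliptic iff `g ≠ 1` and `tr² g` is a real number in `[0,4)`. -/
def IsElliptic (g : PSL2C) : Prop := g ≠ 1 ∧ ∃ r : ℝ, 0 ≤ r ∧ r < 4 ∧ trSq g = (r : ℂ)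

lemma sl2_toLin'_injective (g : SL2C) :
    Function.Injective (Matrix.toLin' (g : Matrix (Fin 2) (Fin 2) ℂ)) := by
  intro v w h
  have h2 : Matrix.toLin' ((g⁻¹ : SL2C) : Matrix (Fin 2) (Fin 2) ℂ)
      (Matrix.toLin' ((g : SL2C) : Matrix (Fin 2) (Fin 2) ℂ) v) =
      Matrix.toLin' ((g⁻¹ : SL2C) : Matrix (Fin 2) (Fin 2) ℂ)
      (Matrix.toLin' ((g : SL2C) : Matrix (Fin 2) (Fin 2) ℂ) w) := by rw [h]
  rwa [← Matrix.toLin'_mul_apply, ← Matrix.toLin'_mul_apply,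
    ← Matrix.SpecialLinearGroup.coe_mul, inv_mul_cancel,
    Matrix.SpecialLinearGroup.coe_one, Matrix.toLin'_one, LinearMap.id_apply,
    LinearMap.id_apply] at h2

/-- The action of `PSL(2,ℂ)` on `ℙ¹(ℂ)` by Möbius transformations (independent of the
choice of representative, since the center acts trivially on lines). -/
def pslAct (g : PSL2C) (x : P1) : P1 :=
  Projectivization.map (Matrix.toLin' ((Quotient.out g : SL2C) : Matrix (Fin 2) (Fin 2) ℂ))
    (sl2_toLin'_injective _) x

/-- A subgroup of `PSL(2,ℂ)` is elementary if it has a nonempty invariant subset of `ℙ¹(ℂ)`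
with at most two elements, or its closure is compact. -/
def IsElementarySubgroup (G : Subgroup PSL2C) : Prop :=
  (∃ S : Set P1, S.Nonempty ∧ S.Finite ∧ S.ncard ≤ 2 ∧ ∀ g ∈ G, pslAct g '' S = S) ∨
    IsCompact (closure (G : Set PSL2C))

/-- A homomorphism to `PSL(2,ℂ)` is non-elementary if its image is non-elementary. -/
def IsNonElem {H : Type*} [Group H] (ρ : H →* PSL2C) : Prop :=
  ¬ IsElementarySubgroup ρ.range

/-- `g` sends a fixed point of `h` to the other one. -/
def SendsFixedToOther (g h : PSL2C) : Prop :=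
  ∃ p q : P1, p ≠ q ∧ pslAct h p = p ∧ pslAct h q = q ∧ (pslAct g p = q ∨ pslAct g q = p)

/-- `g` interchanges the two fixed points of `h`. -/
def InterchangesFixed (g h : PSL2C) : Prop :=
  ∃ p q : P1, p ≠ q ∧ pslAct h p = p ∧ pslAct h q = q ∧ pslAct g p = q ∧ pslAct g q = p

/-- `PSL(2,ℝ)` as a subgroup of `PSL(2,ℂ)`: the image of `SL(2,ℝ)`. -/
def PSL2R : Subgroup PSL2C :=
  (projPSL.comp (Matrix.SpecialLinearGroup.map (n := Fin 2) Complex.ofRealHom)).range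

/-- `γ₁, γ₂` generate a rank-two Schottky group: the induced map from the free group `F₂` is
injective, with discrete image, all of whose nontrivial elements are loxodromic. -/
def GeneratesSchottky (γ₁ γ₂ : PSL2C) : Prop :=
  Function.Injective (FreeGroup.lift ![γ₁, γ₂] : FreeGroup (Fin 2) →* PSL2C) ∧
    DiscreteTopology ((FreeGroup.lift ![γ₁, γ₂] : FreeGroup (Fin 2) →* PSL2C).range) ∧
    ∀ g ∈ (FreeGroup.lift ![γ₁, γ₂] : FreeGroup (Fin 2) →* PSL2C).range, g ≠ 1 → IsLoxodromic g

/-- The commutator `[x,y] = y⁻¹x⁻¹yx` in a free group. -/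
def commF {α : Type*} (x y : FreeGroup α) : FreeGroup α := y⁻¹ * x⁻¹ * y * x

/-- The surface relator `[a_g,b_g]⋯[a₁,b₁]`. -/
def surfaceRel (g : ℕ) : FreeGroup (Fin g × Bool) :=
  (((List.finRange g).reverse).map
    (fun i => commF (FreeGroup.of (i, false)) (FreeGroup.of (i, true)))).prod

/-- The genus-`g` surface group `Γ_g`. -/
abbrev SurfaceGroup (g : ℕ) : Type :=
  PresentedGroup ({surfaceRel g} : Set (FreeGroup (Fin g × Bool)))

/-- The generator `a_{i+1}` of `Γ_g`. -/
def sgA (g : ℕ) (i : Fin g) : SurfaceGroup g := PresentedGroup.of (i, false)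

/-- The generator `b_{i+1}` of `Γ_g`. -/
def sgB (g : ℕ) (i : Fin g) : SurfaceGroup g := PresentedGroup.of (i, true)

/-- The genus-2 surface group `Γ₂`. -/
abbrev Gamma2 : Type := SurfaceGroup 2
def a1 : Gamma2 := sgA 2 0
def b1 : Gamma2 := sgB 2 0
def a2 : Gamma2 := sgA 2 1
def b2 : Gamma2 := sgB 2 1

/-- Relations for the group `Γ = ⟨q₁,…,q₆ ∣ qᵢ² = 1, q₁q₂q₃q₄q₅q₆ = 1⟩`. -/
def pentagonRels : Set (FreeGroup (Fin 6)) :=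
  (Set.range fun i : Fin 6 => FreeGroup.of i * FreeGroup.of i) ∪
    {((List.finRange 6).map FreeGroup.of).prod}

/-- The group `Γ = ⟨q₁,…,q₆ ∣ qᵢ² = 1, q₁q₂q₃q₄q₅q₆ = 1⟩`. -/
abbrev GammaP : Type := PresentedGroup pentagonRels

/-- The generator `q_{i+1}` of `Γ`. -/
def qgen (i : Fin 6) : GammaP := PresentedGroup.of i

lemma qgen_mul_self (i : Fin 6) : qgen i * qgen i = 1 := by
  have hmem : FreeGroup.of i * FreeGroup.of i ∈ pentagonRels :=
    Set.mem_union_left _ ⟨i, rfl⟩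
  have h : (PresentedGroup.mk pentagonRels (FreeGroup.of i * FreeGroup.of i)) = 1 :=
    (QuotientGroup.eq_one_iff _).mpr (Subgroup.subset_normalClosure hmem)
  rw [_root_.map_mul] at h
  exact h

lemma qgen_prod : qgen 0 * (qgen 1 * (qgen 2 * (qgen 3 * (qgen 4 * qgen 5)))) = 1 := by
  have hmem : ((List.finRange 6).map FreeGroup.of).prod ∈ pentagonRels :=
    Set.mem_union_right _ rfl
  have h : (PresentedGroup.mk pentagonRels (((List.finRange 6).map FreeGroup.of).prod)) = 1 :=
    (QuotientGroup.eq_one_iff _).mpr (Subgroup.subset_normalClosure hmem)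
  have h6 : List.finRange 6 = [0, 1, 2, 3, 4, 5] := by decide
  rw [h6] at h
  simpa [mul_assoc, qgen, PresentedGroup.of] using h

lemma pent_helper {G : Type*} [Group G] (x : Fin 6 → G) (hx : ∀ i, x i * x i = 1)
    (hp : x 0 * (x 1 * (x 2 * (x 3 * (x 4 * x 5)))) = 1) :
    (x 4 * x 5)⁻¹ * (x 4 * x 3)⁻¹ * (x 4 * x 5) * (x 4 * x 3) *
      ((x 1 * x 2)⁻¹ * (x 1 * x 0)⁻¹ * (x 1 * x 2) * (x 1 * x 0)) = 1 := by
  have hinv : ∀ i, (x i)⁻¹ = x i := fun i => inv_eq_of_mul_eq_one_right (hx i)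
  have hrev : x 5 * (x 4 * (x 3 * (x 2 * (x 1 * x 0)))) = 1 := by
    have h := congrArg (·⁻¹) hp
    simpa [_root_.mul_inv_rev, hinv, mul_assoc] using h
  have key : ∀ (i : Fin 6) (t : G), x i * (x i * t) = t := fun i t => by
    rw [← mul_assoc, hx, one_mul]
  have key2 : ∀ t : G, x 5 * (x 4 * (x 3 * (x 2 * (x 1 * (x 0 * t))))) = t := fun t => by
    calc x 5 * (x 4 * (x 3 * (x 2 * (x 1 * (x 0 * t)))))
        = (x 5 * (x 4 * (x 3 * (x 2 * (x 1 * x 0))))) * t := by simp [mul_assoc]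
      _ = t := by rw [hrev, one_mul]
  simp only [_root_.mul_inv_rev, hinv, mul_assoc]
  simp only [key, key2]
  exact hrev

/-- The images of the generators `a₁, b₁, a₂, b₂` under `ι`. -/
def pentMap : Fin 2 × Bool → GammaP
  | (0, false) => qgen 1 * qgen 0
  | (0, true) => qgen 1 * qgen 2
  | (1, false) => qgen 4 * qgen 3
  | (1, true) => qgen 4 * qgen 5

lemma surfaceRel_two :
    surfaceRel 2 = commF (FreeGroup.of ((1 : Fin 2), false)) (FreeGroup.of ((1 : Fin 2), true)) *
      commF (FreeGroup.of ((0 : Fin 2), false)) (FreeGroup.of ((0 : Fin 2), true)) := by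
  have h : List.finRange 2 = [0, 1] := by decide
  simp [surfaceRel, h]

/-- The embedding `ι : Γ₂ → Γ`, `a₁ ↦ q₂q₁`, `b₁ ↦ q₂q₃`, `a₂ ↦ q₅q₄`, `b₂ ↦ q₅q₆`. -/
def iota : Gamma2 →* GammaP :=
  PresentedGroup.toGroup (f := pentMap) (by
    intro r hr
    rw [Set.mem_singleton_iff] at hr
    subst hr
    rw [surfaceRel_two]
    simp only [commF, _root_.map_mul, _root_.map_inv, FreeGroup.lift_apply_of]
    have h01 : pentMap ((0 : Fin 2), false) = qgen 1 * qgen 0 := rfl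
    have h02 : pentMap ((0 : Fin 2), true) = qgen 1 * qgen 2 := rfl
    have h11 : pentMap ((1 : Fin 2), false) = qgen 4 * qgen 3 := rfl
    have h12 : pentMap ((1 : Fin 2), true) = qgen 4 * qgen 5 := rfl
    rw [h01, h02, h11, h12]
    exact pent_helper (fun i => qgen i) qgen_mul_self qgen_prod)

/-- A pentagon representation: a non-elementary `ρ : Γ₂ → PSL(2,ℂ)` extending to `Γ` with
exactly one `qᵢ` killed. -/
def IsPentagonRep (ρ : Gamma2 →* PSL2C) : Prop :=
  IsNonElem ρ ∧ ∃ ρ' : GammaP →* PSL2C, ρ'.comp iota = ρ ∧ ∃! i : Fin 6, ρ' (qgen i) = 1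

/-- A primitive element of the free group `F₂`: part of a free basis. -/
def IsPrimitiveF2 (γ : FreeGroup (Fin 2)) : Prop :=
  ∃ φ : MulAut (FreeGroup (Fin 2)), φ (FreeGroup.of 0) = γ

/-- `pp` and `pm` are the attracting resp. repelling fixed points of `α`: for a representative
`A ∈ SL(2,ℂ)` with eigenvalues `l, l⁻¹`, `|l| > 1`, they are the corresponding eigenlines. -/
def IsAttrRep (α : PSL2C) (pp pm : P1) : Prop :=
  ∃ A : SL2C, projPSL A = α ∧ ∃ l : ℂ, 1 < ‖l‖ ∧
    ∃ (v w : Fin 2 → ℂ) (hv : v ≠ 0) (hw : w ≠ 0),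
      (A : Matrix (Fin 2) (Fin 2) ℂ) *ᵥ v = l • v ∧
      (A : Matrix (Fin 2) (Fin 2) ℂ) *ᵥ w = l⁻¹ • w ∧
      pp = Projectivization.mk ℂ v hv ∧ pm = Projectivization.mk ℂ w hw

lemma center_sl2 (z : SL2C) (hz : z ∈ Subgroup.center SL2C) :
    (z : Matrix (Fin 2) (Fin 2) ℂ) = 1 ∨ (z : Matrix (Fin 2) (Fin 2) ℂ) = -1 := by
  obtain ⟨r, hr, hs⟩ := Matrix.SpecialLinearGroup.mem_center_iff.mp hz
  simp [Fintype.card_fin] at hr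
  rcases hr with h | h
  · left; rw [← hs, h]; simp
  · right; rw [← hs, h]; simp [Matrix.scalar_apply]
    ext i j; simp [Matrix.scalar_apply, Matrix.one_apply, Matrix.diagonal]
    split <;> simp

-- trace of two reps of same PSL element
lemma trace_rep {A B : SL2C} (h : projPSL A = projPSL B) :
    Matrix.trace (B : Matrix (Fin 2) (Fin 2) ℂ) = Matrix.trace (A : Matrix (Fin 2) (Fin 2) ℂ) ∨
    Matrix.trace (B : Matrix (Fin 2) (Fin 2) ℂ) = -Matrix.trace (A : Matrix (Fin 2) (Fin 2) ℂ) := by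
  rw [projPSL, QuotientGroup.mk'_eq_mk'] at h
  obtain ⟨z, hz, hAz⟩ := h
  rcases center_sl2 z hz with h1 | h1
  · left; rw [← hAz]; simp [h1]
  · right; rw [← hAz]
    have : ((A * z : SL2C) : Matrix (Fin 2) (Fin 2) ℂ) = -(A : Matrix (Fin 2) (Fin 2) ℂ) := by
      simp [h1]
    rw [this, Matrix.trace_neg]

lemma trSq_eq (A : SL2C) : trSq (projPSL A) =
    (Matrix.trace ((A : SL2C) : Matrix (Fin 2) (Fin 2) ℂ)) ^ 2 := by
  have h : projPSL A = projPSL (Quotient.out (projPSL A)) := (Quotient.out_eq _).symm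
  rcases trace_rep h with h1 | h1 <;> rw [trSq, h1] <;> ring

lemma mulVec_ne_zero (A : SL2C) {v : Fin 2 → ℂ} (hv : v ≠ 0) :
    (A : Matrix (Fin 2) (Fin 2) ℂ) *ᵥ v ≠ 0 := by
  intro h
  apply hv
  have := sl2_toLin'_injective A (a₁ := v) (a₂ := 0)
  simp [Matrix.toLin'_apply, h] at this
  exact this

lemma pslAct_mk (A : SL2C) (v : Fin 2 → ℂ) (hv : v ≠ 0) :
    pslAct (projPSL A) (Projectivization.mk ℂ v hv) =
      Projectivization.mk ℂ ((A : Matrix (Fin 2) (Fin 2) ℂ) *ᵥ v) (mulVec_ne_zero A hv) := by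
  set A₀ : SL2C := Quotient.out (projPSL A) with hA₀
  have h : projPSL A = projPSL A₀ := (Quotient.out_eq _).symm
  rw [projPSL, QuotientGroup.mk'_eq_mk'] at h
  obtain ⟨z, hz, hAz⟩ := h
  rw [pslAct, Projectivization.map_mk]
  rcases center_sl2 z hz with h1 | h1
  · have : (A₀ : Matrix (Fin 2) (Fin 2) ℂ) = (A : Matrix (Fin 2) (Fin 2) ℂ) := by
      rw [← hAz]; simp [h1]
    rw [Projectivization.mk_eq_mk_iff]
    exact ⟨1, by simp [Matrix.toLin'_apply, ← hA₀, this]⟩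
  · have : (A₀ : Matrix (Fin 2) (Fin 2) ℂ) = -(A : Matrix (Fin 2) (Fin 2) ℂ) := by
      rw [← hAz]; simp [h1]
    rw [Projectivization.mk_eq_mk_iff]
    refine ⟨-1, ?_⟩
    simp [Matrix.toLin'_apply, ← hA₀, this, Matrix.neg_mulVec]
    exact ⟨by ring, by ring⟩

lemma vec_cases (v : Fin 2 → ℂ) (hv : v ≠ 0) : v 0 ≠ 0 ∨ v 1 ≠ 0 := by
  by_contra h
  push_neg at h
  apply hv
  funext i
  fin_cases i
  · exact h.1
  · exact h.2

lemma cross_ne (w v : Fin 2 → ℂ) (hv : v ≠ 0) (h : ∀ c : ℂ, w ≠ c • v) :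
    w 0 * v 1 - w 1 * v 0 ≠ 0 := by
  intro hc
  rcases vec_cases v hv with h0 | h0
  · apply h (w 0 / v 0)
    funext i
    fin_cases i
    · simp; field_simp
    · simp; field_simp; linear_combination -hc
  · apply h (w 1 / v 1)
    funext i
    fin_cases i
    · simp; field_simp; linear_combination hc
    · simp; field_simp

lemma trace_NB (N B : Matrix (Fin 2) (Fin 2) ℂ) (v : Fin 2 → ℂ)
    (hN0 : N ≠ 0) (htr : Matrix.trace N = 0) (hNv : N *ᵥ v = 0) (hv : v ≠ 0)
    (hcross : (B *ᵥ v) 0 * v 1 - (B *ᵥ v) 1 * v 0 ≠ 0) :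
    Matrix.trace (N * B) ≠ 0 := by
  have e1 : N 0 0 * v 0 + N 0 1 * v 1 = 0 := by
    have := congrFun hNv 0
    simpa [Matrix.mulVec, dotProduct, Fin.sum_univ_two] using this
  have e2 : N 1 0 * v 0 + N 1 1 * v 1 = 0 := by
    have := congrFun hNv 1
    simpa [Matrix.mulVec, dotProduct, Fin.sum_univ_two] using this
  have htr' : N 1 1 = -N 0 0 := by
    have := htr
    simp [Matrix.trace_fin_two] at this
    linear_combination this
  have hB0 : (B *ᵥ v) 0 = B 0 0 * v 0 + B 0 1 * v 1 := by
    simp [Matrix.mulVec, dotProduct, Fin.sum_univ_two]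
  have hB1 : (B *ᵥ v) 1 = B 1 0 * v 0 + B 1 1 * v 1 := by
    simp [Matrix.mulVec, dotProduct, Fin.sum_univ_two]
  rw [hB0, hB1] at hcross
  have htrNB : Matrix.trace (N * B) =
      N 0 0 * B 0 0 + N 0 1 * B 1 0 + N 1 0 * B 0 1 + N 1 1 * B 1 1 := by
    simp [Matrix.trace_fin_two, Matrix.mul_apply, Fin.sum_univ_two]
    ring
  rw [htrNB, htr']
  rw [htr'] at e2
  intro hT
  apply hcross
  -- general plan: if N 0 0 ≠ 0 use the identity; else N is off-diagonal
  rcases eq_or_ne (N 0 0) 0 with ha | ha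
  · rw [ha] at e1 e2 hT
    simp only [zero_mul, neg_zero, zero_add, add_zero] at e1 e2 hT
    -- e1 : N 0 1 * v 1 = 0, e2 : N 1 0 * v 0 = 0, hT : N 0 1 * B 1 0 + N 1 0 * B 0 1 = 0
    have hbc : N 0 1 ≠ 0 ∨ N 1 0 ≠ 0 := by
      by_contra h
      push_neg at h
      apply hN0
      ext i j
      fin_cases i <;> fin_cases j <;> simp [ha, h.1, h.2, htr']
    rcases hbc with hb | hc
    · -- N 0 1 ≠ 0 : v 1 = 0, and N 1 0 * v 0 = 0 with v 0 ≠ 0 forces N 1 0 = 0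
      have hv1 : v 1 = 0 := by
        rcases mul_eq_zero.mp e1 with h | h
        · exact absurd h hb
        · exact h
      have hv0 : v 0 ≠ 0 := by
        rcases vec_cases v hv with h | h
        · exact h
        · exact absurd hv1 h
      have hc : N 1 0 = 0 := by
        rcases mul_eq_zero.mp e2 with h | h
        · exact h
        · exact absurd h hv0
      rw [hc] at hT
      simp only [zero_mul, add_zero] at hT
      have hB10 : B 1 0 = 0 := by
        rcases mul_eq_zero.mp hT with h | h
        · exact absurd h hb
        · exact h
      rw [hv1, hB10]; ring
    · have hv0 : v 0 = 0 := by
        rcases mul_eq_zero.mp e2 with h | h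
        · exact absurd h hc
        · exact h
      have hv1 : v 1 ≠ 0 := by
        rcases vec_cases v hv with h | h
        · exact absurd hv0 h
        · exact h
      have hb : N 0 1 = 0 := by
        rcases mul_eq_zero.mp e1 with h | h
        · exact h
        · exact absurd h hv1
      rw [hb] at hT
      simp only [zero_mul, zero_add] at hT
      have hB01 : B 0 1 = 0 := by
        rcases mul_eq_zero.mp hT with h | h
        · exact absurd h hc
        · exact h
      rw [hv0, hB01]; ring
  · -- N 0 0 ≠ 0: then v 0 ≠ 0 and v 1 ≠ 0
    have hv0 : v 0 ≠ 0 := by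
      intro h
      rw [h] at e2
      simp only [mul_zero, zero_add] at e2
      rcases mul_eq_zero.mp e2 with h' | h'
      · exact ha (by linear_combination -h')
      · rw [h'] at e1
        apply ha
        have : v = 0 := by
          funext i; fin_cases i
          · exact h
          · exact h'
        exact absurd this hv
    have hv1 : v 1 ≠ 0 := by
      intro h
      rw [h] at e1
      simp only [mul_zero, add_zero] at e1
      rcases mul_eq_zero.mp e1 with h' | h'
      · exact ha h'
      · exact hv0 h'
    have key : N 0 0 * ((B 0 0 * v 0 + B 0 1 * v 1) * v 1 - (B 1 0 * v 0 + B 1 1 * v 1) * v 0) = 0 := by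
      linear_combination v 0 * v 1 * hT - B 1 0 * v 0 * e1 - B 0 1 * v 1 * e2
    rcases mul_eq_zero.mp key with h | h
    · exact absurd h ha
    · exact h

lemma Nsq_zero (A : Matrix (Fin 2) (Fin 2) ℂ) (htr : Matrix.trace A = 2)
    (hdet : A.det = 1) : (A - 1) * (A - 1) = 0 := by
  have htr' : A 0 0 + A 1 1 = 2 := by simpa [Matrix.trace_fin_two] using htr
  rw [Matrix.det_fin_two] at hdet
  ext i j
  fin_cases i <;> fin_cases j <;>
    simp [Matrix.mul_apply, Fin.sum_univ_two, Matrix.one_apply]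
  · linear_combination A 0 0 * htr' - hdet
  · linear_combination A 0 1 * htr'
  · linear_combination A 1 0 * htr'
  · linear_combination A 1 1 * htr' - hdet

lemma coe_zpow_eq (A : SL2C) (N : Matrix (Fin 2) (Fin 2) ℂ)
    (hA : (A : Matrix (Fin 2) (Fin 2) ℂ) = 1 + N) (hN : N * N = 0) (k : ℤ) :
    ((A ^ k : SL2C) : Matrix (Fin 2) (Fin 2) ℂ) = 1 + (k : ℂ) • N := by
  have hAinv : ((A⁻¹ : SL2C) : Matrix (Fin 2) (Fin 2) ℂ) = 1 - N := by
    have h1 : (1 + N) * (1 - N) = 1 - N * N := by noncomm_ring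
    rw [hN, sub_zero] at h1
    calc ((A⁻¹ : SL2C) : Matrix (Fin 2) (Fin 2) ℂ)
        = ((A⁻¹ : SL2C) : Matrix (Fin 2) (Fin 2) ℂ) * ((1 + N) * (1 - N)) := by
          rw [h1, mul_one]
      _ = (((A⁻¹ : SL2C) : Matrix (Fin 2) (Fin 2) ℂ) * (A : Matrix (Fin 2) (Fin 2) ℂ)) * (1 - N) := by
          rw [hA, mul_assoc]
      _ = 1 - N := by
          rw [← Matrix.SpecialLinearGroup.coe_mul, inv_mul_cancel,
            Matrix.SpecialLinearGroup.coe_one, one_mul]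
  induction k using Int.induction_on with
  | zero => simp
  | succ n ih =>
      rw [_root_.zpow_add_one, Matrix.SpecialLinearGroup.coe_mul, ih, hA]
      have expand : (1 + ((n : ℤ) : ℂ) • N) * (1 + N) =
          1 + (((n : ℤ) : ℂ) + 1) • N + ((n : ℤ) : ℂ) • (N * N) := by
        rw [add_smul, one_smul]
        noncomm_ring
      rw [expand, hN, smul_zero, add_zero]
      push_cast
      ring_nf
  | pred n ih =>
      rw [_root_.zpow_sub_one, Matrix.SpecialLinearGroup.coe_mul, ih, hAinv]
      have expand : (1 + ((-n : ℤ) : ℂ) • N) * (1 - N) =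
          1 + (((-n : ℤ) : ℂ) - 1) • N - ((-n : ℤ) : ℂ) • (N * N) := by
        rw [sub_smul, one_smul]
        noncomm_ring
      rw [expand, hN, smul_zero, sub_zero]
      push_cast
      ring_nf

/-- for `α` parabolic and `β` not fixing its fixed point, `αᵏβ` is loxodromic for
`|k|` large. -/
theorem statement17 (α β : PSL2C) (p : P1) (hα : IsParabolic α) (hfix : pslAct α p = p)
    (hβ : pslAct β p ≠ p) :
    ∃ K : ℤ, 0 < K ∧ ∀ k : ℤ, K ≤ |k| → IsLoxodromic (α ^ k * β) := by
  classical
  obtain ⟨hα1, hα2⟩ := hα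
  -- a representative of α with trace 2
  have hm1det : (-1 : Matrix (Fin 2) (Fin 2) ℂ).det = 1 := by
    rw [show (-1 : Matrix (Fin 2) (Fin 2) ℂ) = -(1 : Matrix (Fin 2) (Fin 2) ℂ) from rfl,
      Matrix.det_neg]
    simp
  set minusOne : SL2C := ⟨-1, hm1det⟩ with hm1def
  have hm1 : minusOne ∈ Subgroup.center SL2C := by
    rw [Matrix.SpecialLinearGroup.mem_center_iff]
    refine ⟨-1, by norm_num [Fintype.card_fin], ?_⟩
    simp only [hm1def]
    rw [show (-1 : Matrix (Fin 2) (Fin 2) ℂ) = -(1 : Matrix (Fin 2) (Fin 2) ℂ) from rfl]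
    simp [← Matrix.diagonal_one, ← Matrix.diagonal_neg]
  have hm1proj : projPSL minusOne = 1 := (QuotientGroup.eq_one_iff _).mpr hm1
  have htrsq : (Matrix.trace ((Quotient.out α : SL2C) : Matrix (Fin 2) (Fin 2) ℂ)) ^ 2 = 4 := hα2
  have htr24 : Matrix.trace ((Quotient.out α : SL2C) : Matrix (Fin 2) (Fin 2) ℂ) = 2 ∨
      Matrix.trace ((Quotient.out α : SL2C) : Matrix (Fin 2) (Fin 2) ℂ) = -2 := by
    set s := Matrix.trace ((Quotient.out α : SL2C) : Matrix (Fin 2) (Fin 2) ℂ)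
    have : (s - 2) * (s + 2) = 0 := by linear_combination htrsq
    rcases mul_eq_zero.mp this with h | h
    · left; linear_combination h
    · right; linear_combination h
  obtain ⟨A, hA, htrA⟩ : ∃ A : SL2C, projPSL A = α ∧
      Matrix.trace ((A : SL2C) : Matrix (Fin 2) (Fin 2) ℂ) = 2 := by
    rcases htr24 with h | h
    · exact ⟨Quotient.out α, Quotient.out_eq α, h⟩
    · refine ⟨Quotient.out α * minusOne, ?_, ?_⟩
      · rw [_root_.map_mul, hm1proj, mul_one]
        exact Quotient.out_eq α
      · have : ((Quotient.out α * minusOne : SL2C) : Matrix (Fin 2) (Fin 2) ℂ) =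
            -((Quotient.out α : SL2C) : Matrix (Fin 2) (Fin 2) ℂ) := by
          rw [Matrix.SpecialLinearGroup.coe_mul]; exact mul_neg_one _
        rw [this, Matrix.trace_neg, h]
        ring
  set N : Matrix (Fin 2) (Fin 2) ℂ := ((A : SL2C) : Matrix (Fin 2) (Fin 2) ℂ) - 1 with hNdef
  have hAeq : ((A : SL2C) : Matrix (Fin 2) (Fin 2) ℂ) = 1 + N := by rw [hNdef]; abel
  have hN2 : N * N = 0 := Nsq_zero _ htrA A.prop
  have htrN : Matrix.trace N = 0 := by
    rw [hNdef, Matrix.trace_sub, htrA, Matrix.trace_one]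
    norm_num
  -- fixed point data
  set v : Fin 2 → ℂ := p.rep with hvdef
  have hv : v ≠ 0 := p.rep_nonzero
  have hp : Projectivization.mk ℂ v hv = p := p.mk_rep
  have hfix' : Projectivization.mk ℂ (((A : SL2C) : Matrix (Fin 2) (Fin 2) ℂ) *ᵥ v)
      (mulVec_ne_zero A hv) = Projectivization.mk ℂ v hv := by
    rw [← pslAct_mk A v hv, hA, hp, hfix]
  obtain ⟨c, hc⟩ := (Projectivization.mk_eq_mk_iff _ _ _ _ _).mp hfix'
  have hcv : ((A : SL2C) : Matrix (Fin 2) (Fin 2) ℂ) *ᵥ v = (c : ℂ) • v := hc.symm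
  have hNveig : N *ᵥ v = ((c : ℂ) - 1) • v := by
    rw [hNdef, Matrix.sub_mulVec, Matrix.one_mulVec, hcv, sub_smul, one_smul]
  have hNv : N *ᵥ v = 0 := by
    have h2 : N *ᵥ (N *ᵥ v) = 0 := by
      rw [Matrix.mulVec_mulVec, hN2, Matrix.zero_mulVec]
    rw [hNveig, Matrix.mulVec_smul, hNveig, smul_smul] at h2
    have hc1 : (c : ℂ) - 1 = 0 := by
      rcases smul_eq_zero.mp h2 with h | h
      · rcases mul_eq_zero.mp h with h' | h' <;> exact h'
      · exact absurd h hv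
    rw [hNveig, hc1, zero_smul]
  have hN0 : N ≠ 0 := by
    intro h
    apply hα1
    have : A = 1 := by
      apply Subtype.ext
      rw [hAeq, h, add_zero]
      rfl
    rw [← hA, this, _root_.map_one]
  -- β data
  set B : SL2C := Quotient.out β with hBdef
  have hB : projPSL B = β := Quotient.out_eq β
  have hβ' : Projectivization.mk ℂ (((B : SL2C) : Matrix (Fin 2) (Fin 2) ℂ) *ᵥ v)
      (mulVec_ne_zero B hv) ≠ Projectivization.mk ℂ v hv := by
    rw [← pslAct_mk B v hv, hB, hp]
    exact hβ
  have hnp : ∀ d : ℂ, ((B : SL2C) : Matrix (Fin 2) (Fin 2) ℂ) *ᵥ v ≠ d • v := by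
    intro d hd
    have hd0 : d ≠ 0 := by
      intro h
      rw [h, zero_smul] at hd
      exact mulVec_ne_zero B hv hd
    apply hβ'
    rw [Projectivization.mk_eq_mk_iff]
    exact ⟨Units.mk0 d hd0, by simp [hd]⟩
  have hcross := cross_ne _ v hv hnp
  set t : ℂ := Matrix.trace (N * ((B : SL2C) : Matrix (Fin 2) (Fin 2) ℂ)) with htdef
  have ht : t ≠ 0 := trace_NB N _ v hN0 htrN hNv hv hcross
  set b : ℂ := Matrix.trace ((B : SL2C) : Matrix (Fin 2) (Fin 2) ℂ) with hbdef
  -- trace formula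
  have hts : ∀ k : ℤ, trSq (α ^ k * β) = (b + (k : ℂ) * t) ^ 2 := by
    intro k
    have hrep : projPSL (A ^ k * B) = α ^ k * β := by
      rw [_root_.map_mul, _root_.map_zpow, hA, hB]
    rw [← hrep, trSq_eq, Matrix.SpecialLinearGroup.coe_mul, coe_zpow_eq A N hAeq hN2,
      add_mul, one_mul, Matrix.smul_mul, Matrix.trace_add, Matrix.trace_smul]
    rw [← hbdef, ← htdef]
    simp [smul_eq_mul]
  -- numeric choice of K
  have htpos : 0 < ‖t‖ := by
    simpa using ht
  set x : ℝ := (2 + ‖b‖) / ‖t‖ with hxdef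
  have hx0 : 0 ≤ x := by positivity
  refine ⟨⌈x⌉ + 1, ?_, ?_⟩
  · have := Int.ceil_nonneg hx0
    omega
  · intro k hk
    rintro ⟨r, hr0, hr4, heq⟩
    rw [hts k] at heq
    -- |b + k t| > 2
    have habs : ‖(b + (k : ℂ) * t) ^ 2‖ = r := by
      rw [heq]
      rw [Complex.norm_real, Real.norm_eq_abs, abs_of_nonneg hr0]
    rw [norm_pow] at habs
    have hklower : x + 1 ≤ ((|k| : ℤ) : ℝ) := by
      have h1 : ((⌈x⌉ + 1 : ℤ) : ℝ) ≤ ((|k| : ℤ) : ℝ) := by exact_mod_cast hk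
      have h2 : x ≤ (⌈x⌉ : ℝ) := Int.le_ceil x
      push_cast at h1 ⊢
      linarith
    have habsk : ‖(k : ℂ)‖ = ((|k| : ℤ) : ℝ) := by
      rw [Complex.norm_intCast, Int.cast_abs]
    have hlow : 2 + ‖t‖ ≤ ‖b + (k : ℂ) * t‖ := by
      have h1 : ‖(k : ℂ) * t‖ = ((|k| : ℤ) : ℝ) * ‖t‖ := by
        rw [norm_mul, habsk]
      have h2 : ‖(k : ℂ) * t‖ ≤ ‖b + (k : ℂ) * t‖ + ‖b‖ := by
        calc ‖(k : ℂ) * t‖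
            = ‖(b + (k : ℂ) * t) + (-b)‖ := by
              congr 1
              ring
          _ ≤ ‖b + (k : ℂ) * t‖ + ‖-b‖ := norm_add_le _ _
          _ = ‖b + (k : ℂ) * t‖ + ‖b‖ := by rw [norm_neg]
      have h3 : (x + 1) * ‖t‖ ≤ ((|k| : ℤ) : ℝ) * ‖t‖ :=
        mul_le_mul_of_nonneg_right hklower htpos.le
      have h4 : (x + 1) * ‖t‖ = 2 + ‖b‖ + ‖t‖ := by
        rw [hxdef, add_mul, one_mul, div_mul_cancel₀]
        exact htpos.ne'
      rw [h1] at h2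
      rw [h4] at h3
      linarith
    have hsq : (2 + ‖t‖) ^ 2 ≤ r := by
      rw [← habs]
      have h5 : 0 ≤ 2 + ‖t‖ := by positivity
      nlinarith [norm_nonneg (b + (k : ℂ) * t)]
    nlinarith [htpos]
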